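/- For every x ≥ 0, the Gaussian Q-function satisfies Craig's formula: Q(x) = (1/π) ∫₀^{π/2} exp(-x² / (2 sin² θ)) dθ, where Q(x) = ∫ₓ^∞ (1/√(2π)) exp(-t²/2) dt. -/

import Mathlib

open MeasureTheory Real

/-- The Gaussian Q-function: the tail probability of the standard normal distribution. -/
noncomputable def gaussQ (x : ℝ) : ℝ :=
  ∫ t in Set.Ioi x, (1 / Real.sqrt (2 * Real.pi)) * Real.exp (-t ^ 2 / 2)

namespace CraigAux

lemma cot_image (x : ℝ) (hx : 0 < x) :
    (fun θ => x * (Real.cos θ / Real.sin θ)) '' Set.Ioo 0 (Real.pi/2) = Set.Ioi 0 := by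
  ext u
  constructor
  · rintro ⟨θ, ⟨h1, h2⟩, rfl⟩
    have hs : 0 < Real.sin θ := Real.sin_pos_of_pos_of_lt_pi h1 (h2.trans (by linarith [Real.pi_pos]))
    have hc : 0 < Real.cos θ := Real.cos_pos_of_mem_Ioo ⟨by linarith [Real.pi_pos], h2⟩
    exact mul_pos hx (div_pos hc hs)
  · intro hu
    have hu : 0 < u := hu
    have hpos : 0 < Real.arctan (x / u) := by
      rw [← Real.arctan_zero]
      exact Real.arctan_strictMono (div_pos hx hu)
    refine ⟨Real.arctan (x / u), ⟨hpos, Real.arctan_lt_pi_div_two _⟩, ?_⟩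
    simp only [Real.cos_arctan, Real.sin_arctan]
    have h1 : (0:ℝ) < Real.sqrt (1 + (x/u)^2) := Real.sqrt_pos.2 (by positivity)
    field_simp

lemma cot_injOn (x : ℝ) (hx : 0 < x) :
    Set.InjOn (fun θ => x * (Real.cos θ / Real.sin θ)) (Set.Ioo 0 (Real.pi/2)) := by
  have : StrictAntiOn (fun θ => x * (Real.cos θ / Real.sin θ)) (Set.Ioo 0 (Real.pi/2)) := by
    intro a ⟨ha1, ha2⟩ b ⟨hb1, hb2⟩ hab
    have pi2 : Real.pi / 2 ≤ Real.pi := by linarith [Real.pi_pos]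
    have hsa : 0 < Real.sin a := Real.sin_pos_of_pos_of_lt_pi ha1 (lt_of_lt_of_le ha2 pi2)
    have hsb : 0 < Real.sin b := Real.sin_pos_of_pos_of_lt_pi hb1 (lt_of_lt_of_le hb2 pi2)
    have hca : 0 < Real.cos a := Real.cos_pos_of_mem_Ioo ⟨by linarith [Real.pi_pos], ha2⟩
    have hcb : 0 ≤ Real.cos b := Real.cos_nonneg_of_mem_Icc ⟨by linarith [Real.pi_pos], hb2.le⟩
    have hcab : Real.cos b < Real.cos a :=
      Real.cos_lt_cos_of_nonneg_of_le_pi ha1.le (lt_of_lt_of_le hb2 pi2).le hab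
    have hsab : Real.sin a < Real.sin b :=
      Real.sin_lt_sin_of_lt_of_le_pi_div_two (by linarith [Real.pi_pos]) hb2.le hab
    have : Real.cos b / Real.sin b < Real.cos a / Real.sin a := by
      rw [div_lt_div_iff₀ hsb hsa]
      nlinarith
    exact mul_lt_mul_of_pos_left this hx
  exact this.injOn

lemma cot_hasDeriv (x : ℝ) : ∀ θ ∈ Set.Ioo 0 (Real.pi/2),
    HasDerivWithinAt (fun θ => x * (Real.cos θ / Real.sin θ))
      (-(x / Real.sin θ ^ 2)) (Set.Ioo 0 (Real.pi/2)) θ := by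
  intro θ ⟨h1, h2⟩
  have hs : Real.sin θ ≠ 0 :=
    (Real.sin_pos_of_pos_of_lt_pi h1 (h2.trans (by linarith [Real.pi_pos]))).ne'
  have h := ((Real.hasDerivAt_cos θ).div (Real.hasDerivAt_sin θ) hs).const_mul x
  refine h.hasDerivWithinAt.congr_deriv ?_
  rw [show -Real.sin θ * Real.sin θ - Real.cos θ * Real.cos θ = -1 by
    nlinarith [Real.sin_sq_add_cos_sq θ]]
  ring

lemma key_subst (x : ℝ) (hx : 0 < x) :
    ∫ θ in Set.Ioo 0 (Real.pi/2), (x / Real.sin θ ^ 2) * Real.exp (-x^2/(2*Real.sin θ^2))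
      = Real.sqrt (2*Real.pi)/2 * Real.exp (-x^2/2) := by
  have h := integral_image_eq_integral_abs_deriv_smul measurableSet_Ioo (cot_hasDeriv x)
    (cot_injOn x hx) (fun u => Real.exp (-(x^2+u^2)/2))
  rw [cot_image x hx] at h
  have hL : ∫ u in Set.Ioi (0:ℝ), Real.exp (-(x^2+u^2)/2)
      = Real.sqrt (2*Real.pi)/2 * Real.exp (-x^2/2) := by
    have : ∀ u : ℝ, Real.exp (-(x^2+u^2)/2) = Real.exp (-x^2/2) * Real.exp (-(2⁻¹:ℝ) * u^2) := by
      intro u; rw [← Real.exp_add]; ring_nf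
    simp_rw [this]
    rw [MeasureTheory.integral_const_mul, integral_gaussian_Ioi]
    rw [show Real.pi / (2⁻¹:ℝ) = 2 * Real.pi by ring]
    ring
  have hR : ∫ θ in Set.Ioo 0 (Real.pi/2),
        |(-(x / Real.sin θ ^ 2))| • Real.exp (-(x^2+(x * (Real.cos θ / Real.sin θ))^2)/2)
      = ∫ θ in Set.Ioo 0 (Real.pi/2), (x / Real.sin θ ^ 2) * Real.exp (-x^2/(2*Real.sin θ^2)) := by
    apply MeasureTheory.setIntegral_congr_fun measurableSet_Ioo
    intro θ ⟨h1, h2⟩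
    have hs : 0 < Real.sin θ :=
      Real.sin_pos_of_pos_of_lt_pi h1 (h2.trans (by linarith [Real.pi_pos]))
    have habs : |(-(x / Real.sin θ ^ 2))| = x / Real.sin θ ^ 2 := by
      rw [abs_neg, abs_of_nonneg (by positivity)]
    have hexp : -(x^2+(x * (Real.cos θ / Real.sin θ))^2)/2 = -x^2/(2*Real.sin θ^2) := by
      field_simp
      linear_combination (-1) * (Real.sin_sq_add_cos_sq θ)
    simp only [habs, hexp, smul_eq_mul]
  rw [hL, hR] at h
  exact h.symm

lemma meas_F (x : ℝ) : Measurable (fun θ => Real.exp (-x^2/(2*Real.sin θ^2))) := by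
  apply Real.measurable_exp.comp
  exact measurable_const.div ((Real.measurable_sin.pow_const 2).const_mul 2)

lemma meas_F' (x : ℝ) :
    Measurable (fun θ => -(x / Real.sin θ ^ 2) * Real.exp (-x^2/(2*Real.sin θ^2))) := by
  exact ((measurable_const.div (Real.measurable_sin.pow_const 2)).neg).mul (meas_F x)

lemma intInt_F (x : ℝ) :
    IntervalIntegrable (fun θ => Real.exp (-x^2/(2*Real.sin θ^2))) volume 0 (Real.pi/2) := by
  rw [intervalIntegrable_iff, Set.uIoc_of_le (by positivity : (0:ℝ) ≤ Real.pi/2)]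
  refine ((integrableOn_const (C := (1:ℝ)) measure_Ioc_lt_top.ne)).mono'
    (meas_F x).aestronglyMeasurable ?_
  filter_upwards with θ
  rw [Real.norm_eq_abs, abs_of_nonneg (Real.exp_pos _).le]
  exact Real.exp_le_one_iff.2
    (div_nonpos_of_nonpos_of_nonneg (neg_nonpos.2 (by positivity)) (by positivity))

lemma G_hasDeriv (x₀ : ℝ) (hx : 0 < x₀) :
    HasDerivAt (fun x => ∫ θ in (0:ℝ)..(Real.pi/2), Real.exp (-x^2/(2*Real.sin θ^2)))
      (-(Real.sqrt (2*Real.pi)/2 * Real.exp (-x₀^2/2))) x₀ := by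
  have hpi : (0:ℝ) ≤ Real.pi/2 := by positivity
  have huIoc : Set.uIoc (0:ℝ) (Real.pi/2) = Set.Ioc 0 (Real.pi/2) := Set.uIoc_of_le hpi
  have hsin : ∀ θ ∈ Set.Ioc (0:ℝ) (Real.pi/2), 0 < Real.sin θ := fun θ hθ =>
    Real.sin_pos_of_pos_of_lt_pi hθ.1 (lt_of_le_of_lt hθ.2 (by linarith [Real.pi_pos]))
  have key := intervalIntegral.hasDerivAt_integral_of_dominated_loc_of_deriv_le
    (F := fun x θ => Real.exp (-x^2/(2*Real.sin θ^2)))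
    (F' := fun x θ => -(x / Real.sin θ ^ 2) * Real.exp (-x^2/(2*Real.sin θ^2)))
    (x₀ := x₀) (a := 0) (b := Real.pi/2) (μ := volume)
    (bound := fun _ => 4/x₀) (Metric.ball_mem_nhds x₀ (half_pos hx))
    (Filter.Eventually.of_forall fun x => (meas_F x).aestronglyMeasurable)
    (intInt_F x₀) (meas_F' x₀).aestronglyMeasurable
    ?_ (intervalIntegrable_const) ?_
  · obtain ⟨-, hd⟩ := key
    refine hd.congr_deriv ?_
    rw [intervalIntegral.integral_of_le hpi, MeasureTheory.integral_Ioc_eq_integral_Ioo]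
    have : ∀ θ ∈ Set.Ioo (0:ℝ) (Real.pi/2),
        -(x₀ / Real.sin θ ^ 2) * Real.exp (-x₀^2/(2*Real.sin θ^2))
          = -((x₀ / Real.sin θ ^ 2) * Real.exp (-x₀^2/(2*Real.sin θ^2))) := by
      intro θ hθ; ring
    rw [MeasureTheory.setIntegral_congr_fun measurableSet_Ioo this,
      MeasureTheory.integral_neg, key_subst x₀ hx]
  · filter_upwards with θ hθ x hxball
    rw [huIoc] at hθ
    have hs := hsin θ hθ
    have hxr : x₀/2 < x ∧ x < 3*x₀/2 := by
      rw [Metric.mem_ball, Real.dist_eq, abs_lt] at hxball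
      constructor <;> linarith [hxball.1, hxball.2]
    have hx0 : 0 < x := lt_trans (by positivity) hxr.1
    set s := Real.sin θ with hsdef
    set t := x^2/(2*s^2) with htdef
    have ht : 0 < t := by positivity
    have hexp : Real.exp (-t) ≤ 1/t := by
      rw [Real.exp_neg, one_div]
      apply inv_anti₀ ht
      linarith [Real.add_one_le_exp t]
    have h1 : -(x / s ^ 2) * Real.exp (-x^2/(2*s^2)) = -(x/s^2 * Real.exp (-t)) := by
      rw [htdef]; ring_nf
    rw [Real.norm_eq_abs]
    have habs : |(-(x / s ^ 2) * Real.exp (-x^2/(2*s^2)))| = x/s^2 * Real.exp (-t) := by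
      rw [h1, abs_neg, abs_of_nonneg (by positivity)]
    rw [habs]
    have hle : x/s^2 * Real.exp (-t) ≤ x/s^2 * (1/t) :=
      mul_le_mul_of_nonneg_left hexp (by positivity)
    have h2 : x/s^2 * (1/t) = 2/x := by
      rw [htdef]; field_simp
    calc x/s^2 * Real.exp (-t) ≤ x/s^2 * (1/t) := hle
      _ = 2/x := h2
      _ ≤ 4/x₀ := by
          rw [div_le_div_iff₀ hx0 hx]
          nlinarith [hxr.1]
  · filter_upwards with θ hθ x hxball
    rw [huIoc] at hθ
    have hs := hsin θ hθ
    have hd : HasDerivAt (fun x : ℝ => -x^2/(2*Real.sin θ^2))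
        (-(2*x^1)/(2*Real.sin θ^2)) x := ((hasDerivAt_pow 2 x).neg).div_const _
    have := hd.exp
    refine this.congr_deriv ?_
    have hs' : Real.sin θ ≠ 0 := hs.ne'
    field_simp

lemma G_cont : Continuous (fun x => ∫ θ in (0:ℝ)..(Real.pi/2),
    Real.exp (-x^2/(2*Real.sin θ^2))) := by
  have hpi : (0:ℝ) ≤ Real.pi/2 := by positivity
  simp only [intervalIntegral.integral_of_le hpi]
  apply MeasureTheory.continuous_of_dominated
    (bound := fun _ => (1:ℝ))
    (fun x => (meas_F x).aestronglyMeasurable.restrict)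
  · intro x
    filter_upwards with θ
    rw [Real.norm_eq_abs, abs_of_nonneg (Real.exp_pos _).le]
    exact Real.exp_le_one_iff.2
      (div_nonpos_of_nonpos_of_nonneg (neg_nonpos.2 (by positivity)) (by positivity))
  · exact (integrableOn_const (C := (1:ℝ)) measure_Ioc_lt_top.ne)
  · filter_upwards with θ
    exact (((continuous_pow 2).neg.div_const (2*Real.sin θ^2)).rexp)

lemma phi_integrable : MeasureTheory.Integrable
    (fun t : ℝ => (1 / Real.sqrt (2 * Real.pi)) * Real.exp (-t ^ 2 / 2)) := by
  have h : ∀ t : ℝ, Real.exp (-t^2/2) = Real.exp (-(2⁻¹:ℝ) * t^2) := by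
    intro t; ring_nf
  simp_rw [h]
  exact (integrable_exp_neg_mul_sq (by norm_num)).const_mul _

lemma phi_cont : Continuous (fun t : ℝ => (1 / Real.sqrt (2 * Real.pi)) * Real.exp (-t ^ 2 / 2)) :=
  continuous_const.mul (((continuous_pow 2).neg.div_const 2).rexp)

lemma gaussQ_zero : gaussQ 0 = 1/2 := by
  rw [gaussQ]
  have h : ∀ t : ℝ, (1 / Real.sqrt (2 * Real.pi)) * Real.exp (-t^2/2)
      = (1 / Real.sqrt (2 * Real.pi)) * Real.exp (-(2⁻¹:ℝ) * t^2) := by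
    intro t; ring_nf
  simp_rw [h]
  rw [MeasureTheory.integral_const_mul, integral_gaussian_Ioi,
    show Real.pi / (2⁻¹:ℝ) = 2 * Real.pi by ring]
  have h2 : Real.sqrt (2*Real.pi) ≠ 0 := by positivity
  field_simp

lemma gaussQ_split (x : ℝ) (hx : 0 ≤ x) :
    gaussQ x = 1/2 - ∫ t in (0:ℝ)..x, (1 / Real.sqrt (2 * Real.pi)) * Real.exp (-t ^ 2 / 2) := by
  have hsplit : (∫ t in Set.Ioc 0 x, (1 / Real.sqrt (2 * Real.pi)) * Real.exp (-t ^ 2 / 2))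
      + gaussQ x = gaussQ 0 := by
    have hdisj : Disjoint (Set.Ioc (0:ℝ) x) (Set.Ioi x) :=
      Set.disjoint_left.2 fun a ha h2 => absurd h2 (not_lt.2 ha.2)
    rw [gaussQ, gaussQ, ← MeasureTheory.setIntegral_union hdisj measurableSet_Ioi
      phi_integrable.integrableOn phi_integrable.integrableOn, Set.Ioc_union_Ioi_eq_Ioi hx]
  rw [gaussQ_zero] at hsplit
  rw [intervalIntegral.integral_of_le hx]
  linarith

end CraigAux

open CraigAux in
/-- Craig's formula for the Gaussian Q-function. -/
theorem craig_formula (x : ℝ) (hx : 0 ≤ x) :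
    gaussQ x =
      (1 / Real.pi) *
        ∫ θ in (0:ℝ)..(Real.pi / 2), Real.exp (-x ^ 2 / (2 * Real.sin θ ^ 2)) := by
  have hG0 : (∫ θ in (0:ℝ)..(Real.pi/2), Real.exp (-(0:ℝ)^2/(2*Real.sin θ^2))) = Real.pi/2 := by
    simp
  rcases hx.eq_or_lt with rfl | hx'
  · rw [gaussQ_zero, hG0]
    field_simp
  · set G : ℝ → ℝ := fun u => ∫ θ in (0:ℝ)..(Real.pi/2), Real.exp (-u^2/(2*Real.sin θ^2))
      with hGdef
    set P : ℝ → ℝ := fun u => ∫ t in (0:ℝ)..u, (1 / Real.sqrt (2 * Real.pi)) * Real.exp (-t^2/2)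
      with hPdef
    set H : ℝ → ℝ := fun u => (1/Real.pi) * G u + P u with hHdef
    have hHderiv : ∀ u ∈ Set.Ioo 0 x, HasDerivAt H 0 u := by
      intro u hu
      have h1 := (G_hasDeriv u hu.1).const_mul (1/Real.pi)
      have h2 : HasDerivAt P ((1 / Real.sqrt (2 * Real.pi)) * Real.exp (-u^2/2)) u :=
        intervalIntegral.integral_hasDerivAt_right
          (phi_cont.intervalIntegrable _ _)
          (phi_cont.stronglyMeasurableAtFilter _ _)
          phi_cont.continuousAt
      have h3 := h1.add h2
      refine h3.congr_deriv ?_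
      have hsq : Real.sqrt (2*Real.pi) * Real.sqrt (2*Real.pi) = 2*Real.pi :=
        Real.mul_self_sqrt (by positivity)
      have hpi : Real.pi ≠ 0 := Real.pi_ne_zero
      have hs : Real.sqrt (2*Real.pi) ≠ 0 := by positivity
      have h1 : (1:ℝ)/Real.sqrt (2*Real.pi) = Real.sqrt (2*Real.pi)/(2*Real.pi) := by
        rw [div_eq_div_iff hs (by positivity)]
        linarith [hsq]
      rw [h1]
      ring
    have hHcont : ContinuousOn H (Set.Icc 0 x) := by
      apply Continuous.continuousOn
      exact ((continuous_const.mul G_cont).add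
        (intervalIntegral.continuous_primitive (fun a b => phi_cont.intervalIntegrable a b) 0))
    obtain ⟨c, hc, hc0⟩ := exists_hasDerivAt_eq_slope H (fun _ => 0) hx' hHcont hHderiv
    have hH : H x = H 0 := by
      have hxne : x - 0 ≠ 0 := by simpa using hx'.ne'
      rcases div_eq_zero_iff.mp hc0.symm with h | h
      · linarith
      · exact absurd h hxne
    have hH0 : H 0 = 1/2 := by
      have hP0 : P 0 = 0 := by simp [hPdef]
      have : G 0 = Real.pi/2 := hG0
      rw [hHdef]
      simp only [hP0, this, add_zero]
      field_simp
    have hfin : (1/Real.pi) * G x = 1/2 - P x := by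
      have h := hH.trans hH0
      rw [hHdef] at h
      simp only at h
      linarith
    rw [gaussQ_split x hx]
    rw [hGdef, hPdef] at hfin
    simp only at hfin
    linarith [hfin]
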